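/- As N → ∞, with ρ*_N = √N/(√N+1), the ratios Δ_W^{(N)}(ρ*_N)/Δ_F^{(N)}(ρ*_N) → 3/2 and Δ_S^{(N)}(ρ*_N)/Δ_F^{(N)}(ρ*_N) → 2, where Δ_F^{(N)}(ρ) = (N/μ)[(1+ρ)ρ²/(N³(1−ρ)³) + 1/(N(1−ρ)) + 1/ρ], Δ_S^{(N)}(ρ) = (N/μ)[1 + 1/ρ], and Δ_W^{(N)}(ρ) = (N/μ)[1 + 1/(ρ(1+ρ))]. -/

import Mathlib

open Filter

noncomputable def ρstar (N : ℕ) : ℝ := Real.sqrt N / (Real.sqrt N + 1)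

noncomputable def ageF (mu : ℝ) (N : ℕ) (ρ : ℝ) : ℝ :=
  (N/mu) * ((1+ρ)*ρ^2/(N^3*(1-ρ)^3) + 1/(N*(1-ρ)) + 1/ρ)

noncomputable def ageS (mu : ℝ) (N : ℕ) (ρ : ℝ) : ℝ := (N/mu) * (1 + 1/ρ)

noncomputable def ageW (mu : ℝ) (N : ℕ) (ρ : ℝ) : ℝ := (N/mu) * (1 + 1/(ρ*(1+ρ)))

private lemma sqrt_cast_atTop : Tendsto (fun N : ℕ => Real.sqrt N) atTop atTop := by
  apply tendsto_atTop_atTop.2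
  intro b
  refine ⟨⌈b^2⌉₊, fun a ha => ?_⟩
  rcases le_or_gt b 0 with hb | hb
  · exact hb.trans (Real.sqrt_nonneg _)
  · rw [show (b : ℝ) = Real.sqrt (b^2) by rw [Real.sqrt_sq hb.le]]
    apply Real.sqrt_le_sqrt
    calc b^2 ≤ (⌈b^2⌉₊ : ℝ) := Nat.le_ceil _
    _ ≤ (a : ℝ) := by exact_mod_cast ha

private lemma sqrt_add_one_atTop : Tendsto (fun N : ℕ => Real.sqrt N + 1) atTop atTop :=
  tendsto_atTop_add_const_right _ 1 sqrt_cast_atTop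

private lemma rho_lim : Tendsto (fun N : ℕ => ρstar N) atTop (nhds 1) := by
  have h : ∀ N : ℕ, ρstar N = 1 - 1 / (Real.sqrt N + 1) := by
    intro N
    have hpos : (0:ℝ) < Real.sqrt N + 1 := by positivity
    field_simp [ρstar]
    rw [ρstar, div_mul_cancel₀ _ hpos.ne']; ring
  simp only [h]
  have h0 : Tendsto (fun N : ℕ => 1 / (Real.sqrt N + 1)) atTop (nhds 0) := by
    simp only [one_div]
    exact tendsto_inv_atTop_zero.comp sqrt_add_one_atTop
  have := (tendsto_const_nhds (α := ℕ) (x := (1:ℝ))).sub h0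
  rw [sub_zero] at this
  exact this

private lemma D_atTop : Tendsto (fun N : ℕ => (N:ℝ) * (1 - ρstar N)) atTop atTop := by
  have heq : ∀ N : ℕ, (N:ℝ) * (1 - ρstar N) = (Real.sqrt N)^2 / (Real.sqrt N + 1) := by
    intro N
    have hpos : (0:ℝ) < Real.sqrt N + 1 := by positivity
    have hsq : (Real.sqrt N)^2 = (N:ℝ) := Real.sq_sqrt (Nat.cast_nonneg N)
    rw [ρstar]
    field_simp
    rw [hsq]; ring
  simp only [heq]
  apply tendsto_atTop_mono (fun N => ?_)
    (tendsto_atTop_add_const_right _ (-1) sqrt_cast_atTop)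
  have hpos : (0:ℝ) < Real.sqrt N + 1 := by positivity
  rw [le_div_iff₀ hpos]
  nlinarith [Real.sqrt_nonneg (N:ℝ)]

private lemma bracketF_lim :
    Tendsto (fun N : ℕ => (1+ρstar N)*(ρstar N)^2/((N:ℝ)^3*(1-ρstar N)^3)
      + 1/((N:ℝ)*(1-ρstar N)) + 1/(ρstar N)) atTop (nhds 1) := by
  have h1 : Tendsto (fun N : ℕ => (1+ρstar N)*(ρstar N)^2/((N:ℝ)^3*(1-ρstar N)^3))
      atTop (nhds 0) := by
    have heq : ∀ N : ℕ, (N:ℝ)^3*(1-ρstar N)^3 = ((N:ℝ)*(1-ρstar N))^3 := by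
      intro N; ring
    simp only [heq]
    exact Tendsto.div_atTop
      ((tendsto_const_nhds.add rho_lim).mul (rho_lim.pow 2))
      ((tendsto_pow_atTop (by norm_num)).comp D_atTop)
  have h2 : Tendsto (fun N : ℕ => 1/((N:ℝ)*(1-ρstar N))) atTop (nhds 0) := by
    simp only [one_div]
    exact tendsto_inv_atTop_zero.comp D_atTop
  have h3 : Tendsto (fun N : ℕ => 1/(ρstar N)) atTop (nhds (1/1)) :=
    tendsto_const_nhds.div rho_lim one_ne_zero
  rw [div_one] at h3
  have := (h1.add h2).add h3
  rw [show ((0:ℝ)+0)+1 = 1 by norm_num] at this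
  exact this

theorem largeN_age_ratios (mu : ℝ) (hmu : 0 < mu) :
    Tendsto (fun N : ℕ => ageW mu N (ρstar N) / ageF mu N (ρstar N)) atTop (nhds (3/2)) ∧
    Tendsto (fun N : ℕ => ageS mu N (ρstar N) / ageF mu N (ρstar N)) atTop (nhds 2) := by
  have hd : Tendsto (fun N : ℕ => ρstar N*(1+ρstar N)) atTop (nhds ((1:ℝ)*(1+1))) :=
    rho_lim.mul (tendsto_const_nhds.add rho_lim)
  rw [show ((1:ℝ)*(1+1)) = 2 by norm_num] at hd
  have hWb : Tendsto (fun N : ℕ => 1 + 1/(ρstar N*(1+ρstar N))) atTop (nhds (1 + 1/2)) :=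
    tendsto_const_nhds.add (tendsto_const_nhds.div hd two_ne_zero)
  rw [show ((1:ℝ) + 1/2) = 3/2 by norm_num] at hWb
  have hSb : Tendsto (fun N : ℕ => 1 + 1/(ρstar N)) atTop (nhds (1 + 1/1)) :=
    tendsto_const_nhds.add (tendsto_const_nhds.div rho_lim one_ne_zero)
  rw [show ((1:ℝ) + 1/1) = 2 by norm_num] at hSb
  have hev : ∀ᶠ N : ℕ in atTop, (N:ℝ)/mu ≠ 0 := by
    filter_upwards [eventually_ge_atTop 1] with N hN
    have : (0:ℝ) < (N:ℝ)/mu := div_pos (by exact_mod_cast hN) hmu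
    exact this.ne'
  constructor
  · have hW := hWb.div bracketF_lim one_ne_zero
    rw [div_one] at hW
    refine hW.congr' ?_
    filter_upwards [hev] with N hN
    rw [Pi.div_apply, ageW, ageF, mul_div_mul_left _ _ hN]
  · have hS := hSb.div bracketF_lim one_ne_zero
    rw [div_one] at hS
    refine hS.congr' ?_
    filter_upwards [hev] with N hN
    rw [Pi.div_apply, ageS, ageF, mul_div_mul_left _ _ hN]
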